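/- arXiv:2407.05062 — 3 statements merged into one kernel-verified Lean document; each statement's English description precedes it below -/
import Mathlib

section
/- For every natural number n ≥ 1, every box K = {x ∈ ℝⁿ : mᵢ ≤ xᵢ ≤ Mᵢ for all i} (with mᵢ ≤ Mᵢ), every continuous function f : ℝⁿ → ℝ, and every ε > 0, there exist N ∈ ℕ, real numbers A₁,…,A_N, B₁,…,B_N, and real numbers C_{i,j} (1 ≤ i ≤ N, 1 ≤ j ≤ n) such that |∑_{i=1}^N Aᵢ · σ(∑_{j=1}^n C_{i,j} xⱼ + Bᵢ) − f(x)| < ε for all x ∈ K; equivalently, the linear span of the functions x ↦ σ(c·x + b) (c ∈ ℝⁿ, b ∈ ℝ) is dense in C(K, ℝ) for the sup norm. -/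
/-- The sigmoid function `σ(y) = (1 + exp (−y))⁻¹`. -/
noncomputable def sigmoid (y : ℝ) : ℝ := (1 + Real.exp (-y))⁻¹

lemma sigmoid_nonneg (y : ℝ) : 0 ≤ sigmoid y := by
  unfold sigmoid; positivity

lemma sigmoid_le_exp (y : ℝ) : sigmoid y ≤ Real.exp y := by
  unfold sigmoid
  have h := Real.exp_pos (-y)
  calc (1 + Real.exp (-y))⁻¹ ≤ (Real.exp (-y))⁻¹ := by
        apply inv_anti₀ h; linarith
    _ = Real.exp y := by rw [Real.exp_neg, inv_inv]

lemma sigmoid_key (t b : ℝ) :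
    Real.exp b * sigmoid (t - b) - Real.exp t = -(Real.exp t * sigmoid (t - b)) := by
  unfold sigmoid
  have h : (0:ℝ) < 1 + Real.exp (-(t - b)) := by positivity
  have h2 : Real.exp (b - t) * Real.exp t = Real.exp b := by
    rw [← Real.exp_add]; ring_nf
  rw [neg_sub] at h ⊢; field_simp
  linear_combination -h2

lemma aux_half (a e : ℝ) (ha : 0 < a) : a * (e / (2 * a)) = e / 2 := by
  field_simp

/-- Universal approximation by finite linear combinations of sigmoids of affine functionals,
uniformly on a box `K = ∏ᵢ [mᵢ, Mᵢ] ⊆ ℝⁿ`. -/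
theorem sigmoid_universal_approximation
    (n : ℕ) (hn : 1 ≤ n) (m M : Fin n → ℝ) (hmM : ∀ i, m i ≤ M i)
    (f : (Fin n → ℝ) → ℝ) (hf : Continuous f) (ε : ℝ) (hε : 0 < ε) :
    ∃ (N : ℕ) (A B : Fin N → ℝ) (C : Fin N → Fin n → ℝ),
      ∀ x ∈ Set.univ.pi (fun i => Set.Icc (m i) (M i)),
        |(∑ i : Fin N, A i * sigmoid (∑ j : Fin n, C i j * x j + B i)) - f x| < ε := by
  set K := Set.univ.pi (fun i => Set.Icc (m i) (M i)) with hKdef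
  have hKc : IsCompact K := isCompact_univ_pi fun i => isCompact_Icc
  haveI : CompactSpace K := isCompact_iff_compactSpace.mp hKc
  -- the exponential functionals
  let E : (Fin n → ℝ) → C(K, ℝ) := fun c =>
    ⟨fun x => Real.exp (∑ j, c j * (x : Fin n → ℝ) j),
      Real.continuous_exp.comp (continuous_finset_sum _ fun j _ =>
        continuous_const.mul ((continuous_apply j).comp continuous_subtype_val))⟩
  let S : Set C(K, ℝ) := Set.range E
  have hmul : ∀ c c', E c * E c' = E (c + c') := by
    intro c c'; ext x
    simp only [ContinuousMap.mul_apply, ContinuousMap.coe_mk, E]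
    rw [← Real.exp_add, ← Finset.sum_add_distrib]
    congr 1
    exact Finset.sum_congr rfl fun j _ => by simp [add_mul]
  have hone : E 0 = 1 := by
    ext x; simp [E]
  let Smon : Submonoid C(K, ℝ) :=
    { carrier := S
      mul_mem' := by rintro _ _ ⟨c, rfl⟩ ⟨c', rfl⟩; exact ⟨c + c', (hmul c c').symm⟩
      one_mem' := ⟨0, hone⟩ }
  let A : Subalgebra ℝ C(K, ℝ) := Algebra.adjoin ℝ S
  -- it separates points
  have hsep : A.SeparatesPoints := by
    intro x y hxy
    have hj : ∃ j, (x : Fin n → ℝ) j ≠ (y : Fin n → ℝ) j := by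
      by_contra h; push_neg at h; exact hxy (Subtype.ext (funext h))
    obtain ⟨j, hj⟩ := hj
    have hval : ∀ z : K, (E (Pi.single j 1)) z = Real.exp ((z : Fin n → ℝ) j) := by
      intro z
      simp only [ContinuousMap.coe_mk, E]
      congr 1
      rw [Finset.sum_eq_single j]
      · simp
      · intro k _ hk; simp [Pi.single_eq_of_ne hk]
      · simp
    refine ⟨_, ⟨E (Pi.single j 1), Algebra.subset_adjoin ⟨_, rfl⟩, rfl⟩, ?_⟩
    show (E (Pi.single j 1)) x ≠ (E (Pi.single j 1)) y
    rw [hval x, hval y]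
    exact fun h => hj (Real.exp_injective h)
  have htop := ContinuousMap.subalgebra_topologicalClosure_eq_top_of_separatesPoints A hsep
  let fK : C(K, ℝ) := ⟨fun x => f x, hf.comp continuous_subtype_val⟩
  have hfK : fK ∈ closure (A : Set C(K, ℝ)) := by
    have h1 : fK ∈ A.topologicalClosure := htop ▸ Algebra.mem_top
    exact h1
  obtain ⟨g, hgA, hdist⟩ := Metric.mem_closure_iff.mp hfK (ε / 2) (by positivity)
  -- g is a finite linear combination of exponentials
  have hg : g ∈ Submodule.span ℝ S := by
    have h1 : g ∈ Subalgebra.toSubmodule (Algebra.adjoin ℝ S) := hgA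
    rw [Algebra.adjoin_eq_span, show Submonoid.closure S = Smon from Submonoid.closure_eq Smon] at h1
    exact h1
  obtain ⟨co, hsupp, hsum⟩ := Submodule.mem_span_set.mp hg
  set N := co.support.card with hN
  let e : Fin N ≃ co.support := co.support.equivFin.symm
  have hchoice : ∀ i : Fin N, ∃ c : Fin n → ℝ, E c = ((e i : co.support) : C(K, ℝ)) :=
    fun i => hsupp (e i).2
  choose cv hcv using hchoice
  let α : Fin N → ℝ := fun i => co ((e i : co.support) : C(K, ℝ))
  -- evaluate g
  have hgx : ∀ x (hx : x ∈ K), g ⟨x, hx⟩ = ∑ i : Fin N, α i * Real.exp (∑ j, cv i j * x j) := by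
    intro x hx
    have h1 : g ⟨x, hx⟩ = ∑ q ∈ co.support, co q * q ⟨x, hx⟩ := by
      rw [← hsum, Finsupp.sum]
      simp [ContinuousMap.sum_apply]
    rw [h1, ← Finset.sum_coe_sort co.support (fun q => co q * q ⟨x, hx⟩),
      ← Equiv.sum_comp e (fun q => co (q : C(K, ℝ)) * (q : C(K, ℝ)) ⟨x, hx⟩)]
    refine Finset.sum_congr rfl fun i _ => ?_
    have h2 : ((e i : C(K, ℝ))) ⟨x, hx⟩ = Real.exp (∑ j, cv i j * x j) := by
      rw [← hcv i]; rfl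
    rw [h2]
  -- bounds
  set Nr : ℝ := (N : ℝ) with hNr
  have hNr0 : 0 ≤ Nr := Nat.cast_nonneg N
  set δ : ℝ := ε / (2 * (Nr + 1)) with hδdef
  have hδ : 0 < δ := by positivity
  let R : Fin N → ℝ := fun i => ∑ j, |cv i j| * max |m j| |M j|
  have htR : ∀ i : Fin N, ∀ x ∈ K, (∑ j, cv i j * x j) ≤ R i := by
    intro i x hx
    refine Finset.sum_le_sum fun j _ => ?_
    have hxj := hx j (Set.mem_univ j)
    calc cv i j * x j ≤ |cv i j * x j| := le_abs_self _
      _ = |cv i j| * |x j| := abs_mul _ _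
      _ ≤ |cv i j| * max |m j| |M j| :=
        mul_le_mul_of_nonneg_left (abs_le_max_abs_abs hxj.1 hxj.2) (abs_nonneg _)
  let D : Fin N → ℝ := fun i => (|α i| + 1) / δ
  have hD : ∀ i, 0 < D i := fun i => div_pos (by positivity) hδ
  let b : Fin N → ℝ := fun i => 2 * R i + Real.log (D i)
  have hexp : ∀ i, Real.exp (2 * R i - b i) = (D i)⁻¹ := by
    intro i
    rw [show 2 * R i - b i = -Real.log (D i) by simp only [b]; ring, Real.exp_neg, Real.exp_log (hD i)]
  have hterm : ∀ i, |α i| * (D i)⁻¹ < δ := by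
    intro i
    have h1 : (D i)⁻¹ = δ / (|α i| + 1) := by rw [inv_div]
    rw [h1, mul_div_assoc', div_lt_iff₀ (by positivity)]
    nlinarith [abs_nonneg (α i), hδ]
  -- conclusion
  refine ⟨N, fun i => α i * Real.exp (b i), fun i => -(b i), cv, ?_⟩
  intro x hx
  set t : Fin N → ℝ := fun i => ∑ j, cv i j * x j with ht
  have harg : ∀ i : Fin N, (∑ j, cv i j * x j) + -(b i) = t i - b i := fun i => by
    rw [ht]; ring
  have eq1 : (∑ i : Fin N, (α i * Real.exp (b i)) * sigmoid (t i - b i))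
      = (∑ i : Fin N, α i * (Real.exp (b i) * sigmoid (t i - b i) - Real.exp (t i)))
        + ∑ i : Fin N, α i * Real.exp (t i) := by
    rw [← Finset.sum_add_distrib]
    exact Finset.sum_congr rfl fun i _ => by ring
  have habs : ∀ i : Fin N, |α i * (Real.exp (b i) * sigmoid (t i - b i) - Real.exp (t i))| ≤ |α i| * (D i)⁻¹ := by
    intro i
    rw [sigmoid_key (t i) (b i), abs_mul, abs_neg,
      abs_of_nonneg (mul_nonneg (Real.exp_nonneg _) (sigmoid_nonneg _))]
    refine mul_le_mul_of_nonneg_left ?_ (abs_nonneg _)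
    rw [← hexp i]
    calc Real.exp (t i) * sigmoid (t i - b i)
        ≤ Real.exp (t i) * Real.exp (t i - b i) :=
          mul_le_mul_of_nonneg_left (sigmoid_le_exp _) (Real.exp_nonneg _)
      _ = Real.exp (t i + (t i - b i)) := (Real.exp_add _ _).symm
      _ ≤ Real.exp (2 * R i - b i) := by
          apply Real.exp_le_exp.mpr
          have := htR i x hx
          linarith
  have hsum1 : |∑ i : Fin N, α i * (Real.exp (b i) * sigmoid (t i - b i) - Real.exp (t i))| ≤ Nr * δ := by
    calc |∑ i : Fin N, α i * (Real.exp (b i) * sigmoid (t i - b i) - Real.exp (t i))|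
        ≤ ∑ i : Fin N, |α i * (Real.exp (b i) * sigmoid (t i - b i) - Real.exp (t i))| :=
          Finset.abs_sum_le_sum_abs _ _
      _ ≤ ∑ _i : Fin N, δ := Finset.sum_le_sum fun i _ => le_of_lt (lt_of_le_of_lt (habs i) (hterm i))
      _ = Nr * δ := by simp [hNr, mul_comm]
  have hNd : Nr * δ ≤ ε / 2 := by
    have h1 : Nr * δ ≤ (Nr + 1) * δ := by nlinarith
    have h2 : (Nr + 1) * δ = ε / 2 := aux_half (Nr + 1) ε (by linarith)
    linarith
  have hgf : |g ⟨x, hx⟩ - f x| < ε / 2 := by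
    have h1 : dist (g ⟨x, hx⟩) (fK ⟨x, hx⟩) ≤ dist g fK := ContinuousMap.dist_apply_le_dist _
    have h2 : dist g fK = dist fK g := dist_comm _ _
    have h3 : fK ⟨x, hx⟩ = f x := rfl
    rw [Real.dist_eq, h3] at h1
    linarith [h1, h2 ▸ h1, hdist]
  calc |(∑ i : Fin N, (α i * Real.exp (b i)) * sigmoid ((∑ j, cv i j * x j) + -(b i))) - f x|
      = |(∑ i : Fin N, α i * (Real.exp (b i) * sigmoid (t i - b i) - Real.exp (t i)))
          + (g ⟨x, hx⟩ - f x)| := by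
        rw [hgx x hx]
        congr 1
        rw [show (∑ i : Fin N, (α i * Real.exp (b i)) * sigmoid ((∑ j, cv i j * x j) + -(b i)))
            = ∑ i : Fin N, (α i * Real.exp (b i)) * sigmoid (t i - b i) from
          Finset.sum_congr rfl fun i _ => by rw [harg i], eq1]
        ring
    _ ≤ |∑ i : Fin N, α i * (Real.exp (b i) * sigmoid (t i - b i) - Real.exp (t i))|
          + |g ⟨x, hx⟩ - f x| := abs_add_le _ _
    _ < ε := by linarith
end

section
/- For every continuous function f : ℝⁿ → ℝ, every box K = ∏_{i=1}^n [mᵢ, Mᵢ] (mᵢ ≤ Mᵢ), and every ε > 0, there exist two finite linear combinations of sigmoids Ψ_U(x) = ∑_{i=1}^{N_U} A_{U,i} σ(∑_j C_{U,i,j} xⱼ + B_{U,i}) and Ψ_L(x) = ∑_{i=1}^{N_L} A_{L,i} σ(∑_j C_{L,i,j} xⱼ + B_{L,i}) (with real coefficients) such that for all x ∈ K: 0 ≤ Ψ_U(x) − f(x) ≤ ε and 0 ≤ f(x) − Ψ_L(x) ≤ ε. -/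
lemma sigmoid_eq (y : ℝ) : sigmoid y = Real.exp y / (1 + Real.exp y) := by
  have h1 : (0:ℝ) < Real.exp y := Real.exp_pos y
  have h2 : (0:ℝ) < 1 + Real.exp y := by linarith
  unfold sigmoid
  rw [Real.exp_neg]
  field_simp
  ring

lemma sigmoid_zero : sigmoid 0 = 1/2 := by
  simp [sigmoid]
  norm_num

/-- `e^{-b} σ(y+b)` approximates `e^y` from below, with error at most `e^{2y+b}`. -/
lemma sigmoid_exp_approx (y b : ℝ) :
    0 ≤ Real.exp y - Real.exp (-b) * sigmoid (y + b) ∧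
      Real.exp y - Real.exp (-b) * sigmoid (y + b) ≤ Real.exp (2*y + b) := by
  have h1 : (0:ℝ) < Real.exp (y+b) := Real.exp_pos _
  have h2 : (0:ℝ) < 1 + Real.exp (y+b) := by linarith
  have key : Real.exp (-b) * sigmoid (y + b) = Real.exp y / (1 + Real.exp (y+b)) := by
    rw [sigmoid_eq, Real.exp_neg]
    rw [Real.exp_add]
    have hb : (0:ℝ) < Real.exp b := Real.exp_pos b
    field_simp
  rw [key]
  have hdiff : Real.exp y - Real.exp y / (1 + Real.exp (y+b))
      = Real.exp y * Real.exp (y+b) / (1 + Real.exp (y+b)) := by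
    field_simp
    ring
  rw [hdiff]
  constructor
  · positivity
  · have : Real.exp y * Real.exp (y+b) = Real.exp (2*y+b) := by
      rw [← Real.exp_add]; ring_nf
    rw [this]
    rw [div_le_iff₀ h2]
    nlinarith [Real.exp_pos (2*y+b)]

section aux
variable {n : ℕ} (K : Set (Fin n → ℝ))

/-- The exponential ridge function `x ↦ exp (w · x)` as a continuous map on `K`. -/
noncomputable def expw (w : Fin n → ℝ) : C(K, ℝ) :=
  ⟨fun x => Real.exp (∑ j, w j * (x : Fin n → ℝ) j),
    Real.continuous_exp.comp (continuous_finset_sum _ fun j _ =>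
      continuous_const.mul ((continuous_apply j).comp continuous_subtype_val))⟩

lemma expw_mul (w w' : Fin n → ℝ) : expw K w * expw K w' = expw K (w + w') := by
  ext x
  simp [expw, ← Real.exp_add, ← Finset.sum_add_distrib, add_mul]

lemma expw_one : expw K 0 = 1 := by
  ext x; simp [expw]

lemma expw_mem_span (g : C(K, ℝ)) (hg : g ∈ Algebra.adjoin ℝ (Set.range (expw K))) :
    g ∈ Submodule.span ℝ (Set.range (expw K)) := by
  have h1 : (Submonoid.closure (Set.range (expw K)) : Set C(K, ℝ)) ⊆ Set.range (expw K) := by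
    intro a ha
    induction ha using Submonoid.closure_induction with
    | mem a ha => exact ha
    | one => exact ⟨0, expw_one K⟩
    | mul a b _ _ ha hb =>
        obtain ⟨w, rfl⟩ := ha
        obtain ⟨w', rfl⟩ := hb
        exact ⟨w + w', (expw_mul K w w').symm⟩
  have := Algebra.adjoin_eq_span (R := ℝ) (s := Set.range (expw K))
  have h2 : g ∈ Submodule.span ℝ ((Submonoid.closure (Set.range (expw K)) : Set C(K, ℝ))) := by
    rw [← this]; exact hg
  exact Submodule.span_le.mpr (fun a ha => Submodule.subset_span (h1 ha)) h2

end aux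

open scoped BigOperators

lemma exists_exp_approx (n : ℕ) (m M : Fin n → ℝ)
    (f : (Fin n → ℝ) → ℝ) (hf : Continuous f) (ε : ℝ) (hε : 0 < ε) :
    ∃ (N : ℕ) (c : Fin N → ℝ) (w : Fin N → Fin n → ℝ),
      ∀ x ∈ Set.univ.pi (fun i => Set.Icc (m i) (M i)),
        |(∑ i : Fin N, c i * Real.exp (∑ j : Fin n, w i j * x j)) - f x| < ε := by
  classical
  set K := Set.univ.pi fun i => Set.Icc (m i) (M i) with hK
  have hKc : IsCompact K := isCompact_univ_pi fun i => isCompact_Icc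
  haveI : CompactSpace K := isCompact_iff_compactSpace.mp hKc
  set A : Subalgebra ℝ C(K, ℝ) := Algebra.adjoin ℝ (Set.range (expw K)) with hA
  have hsep : A.SeparatesPoints := by
    intro x y hxy
    have : ∃ j, (x : Fin n → ℝ) j ≠ (y : Fin n → ℝ) j := by
      by_contra h
      push_neg at h
      exact hxy (Subtype.ext (funext h))
    obtain ⟨j, hj⟩ := this
    set e : Fin n → ℝ := fun j' => if j' = j then (1:ℝ) else 0 with he
    refine ⟨(fun g : C(K, ℝ) => (g : K → ℝ)) (expw K e),
      ⟨expw K e, Algebra.subset_adjoin ⟨e, rfl⟩, rfl⟩, ?_⟩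
    simp only [expw, ContinuousMap.coe_mk]
    have hx : ∀ z : K, (∑ j' : Fin n, e j' * (z : Fin n → ℝ) j')
        = (z : Fin n → ℝ) j := by
      intro z
      rw [Finset.sum_eq_single j]
      · simp [he]
      · intro b _ hb; simp [he, hb]
      · simp
    rw [hx, hx]
    exact fun h => hj (Real.exp_injective h)
  obtain ⟨g, hg⟩ := ContinuousMap.exists_mem_subalgebra_near_continuous_of_separatesPoints
    A hsep (fun x : K => f x) (hf.comp continuous_subtype_val) ε hε
  have hgspan : (g : C(K, ℝ)) ∈ Submodule.span ℝ (Set.range (expw K)) :=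
    expw_mem_span K g g.2
  obtain ⟨N, c, v, hv⟩ := Submodule.mem_span_set'.mp hgspan
  choose w hw using fun i => (v i).2
  refine ⟨N, c, w, fun x hx => ?_⟩
  have hgx := hg ⟨x, hx⟩
  rw [Real.norm_eq_abs] at hgx
  have : (g : C(K, ℝ)) ⟨x, hx⟩ = ∑ i : Fin N, c i * Real.exp (∑ j : Fin n, w i j * x j) := by
    rw [← hv, ContinuousMap.sum_apply]
    refine Finset.sum_congr rfl fun i _ => ?_
    rw [ContinuousMap.smul_apply, ← hw i]
    simp [expw, smul_eq_mul]
  rw [← this]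
  exact hgx

lemma exists_sigmoid_sum_approx (n : ℕ) (m M : Fin n → ℝ)
    (f : (Fin n → ℝ) → ℝ) (hf : Continuous f) (ε : ℝ) (hε : 0 < ε) :
    ∃ (N : ℕ) (A B : Fin N → ℝ) (C : Fin N → Fin n → ℝ),
      ∀ x ∈ Set.univ.pi (fun i => Set.Icc (m i) (M i)),
        |(∑ i : Fin N, A i * sigmoid (∑ j : Fin n, C i j * x j + B i)) - f x| < ε := by
  obtain ⟨N, c, w, hcw⟩ := exists_exp_approx n m M f hf (ε/2) (by linarith)
  set R : Fin N → ℝ := fun i => ∑ j, |w i j| * (|m j| + |M j|) with hR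
  set S : ℝ := ∑ i, |c i| with hS
  have hSnn : 0 ≤ S := Finset.sum_nonneg fun i _ => abs_nonneg _
  set δ : ℝ := (ε/2) / (S + 1) with hδ
  have hδpos : 0 < δ := by positivity
  set B : Fin N → ℝ := fun i => Real.log δ - 2 * R i with hB
  refine ⟨N, fun i => c i * Real.exp (-(B i)), B, w, fun x hx => ?_⟩
  -- bound on coordinates
  have hxj : ∀ j, |x j| ≤ |m j| + |M j| := by
    intro j
    have h1 := (hx j (Set.mem_univ j)).1
    have h2 := (hx j (Set.mem_univ j)).2
    rw [abs_le]
    constructor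
    · have := neg_abs_le (m j); linarith [abs_nonneg (M j)]
    · have := le_abs_self (M j); linarith [abs_nonneg (m j)]
  have hyR : ∀ i : Fin N, (∑ j, w i j * x j) ≤ R i := by
    intro i
    calc (∑ j, w i j * x j) ≤ |∑ j, w i j * x j| := le_abs_self _
    _ ≤ ∑ j, |w i j * x j| := Finset.abs_sum_le_sum_abs _ _
    _ ≤ ∑ j, |w i j| * (|m j| + |M j|) := by
        refine Finset.sum_le_sum fun j _ => ?_
        rw [abs_mul]
        exact mul_le_mul_of_nonneg_left (hxj j) (abs_nonneg _)
  -- per-term error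
  have hterm : ∀ i : Fin N,
      |c i * Real.exp (-(B i)) * sigmoid ((∑ j, w i j * x j) + B i)
        - c i * Real.exp (∑ j, w i j * x j)| ≤ |c i| * δ := by
    intro i
    set y := ∑ j, w i j * x j with hy
    obtain ⟨h1, h2⟩ := sigmoid_exp_approx y (B i)
    have hexp : Real.exp (2*y + B i) ≤ δ := by
      have : 2*y + B i = Real.log δ + (2*y - 2*R i) := by rw [hB]; ring
      rw [this, Real.exp_add, Real.exp_log hδpos]
      have h3 : Real.exp (2*y - 2*R i) ≤ 1 := by
        rw [Real.exp_le_one_iff]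
        have := hyR i; linarith
      nlinarith
    have : |Real.exp (-(B i)) * sigmoid (y + B i) - Real.exp y| ≤ δ := by
      rw [abs_sub_comm, abs_of_nonneg h1]; linarith
    calc |c i * Real.exp (-(B i)) * sigmoid (y + B i) - c i * Real.exp y|
        = |c i| * |Real.exp (-(B i)) * sigmoid (y + B i) - Real.exp y| := by
          rw [← abs_mul]; ring_nf
      _ ≤ |c i| * δ := mul_le_mul_of_nonneg_left this (abs_nonneg _)
  have hsum : |(∑ i, c i * Real.exp (-(B i)) * sigmoid ((∑ j, w i j * x j) + B i))
      - (∑ i, c i * Real.exp (∑ j, w i j * x j))| ≤ S * δ := by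
    rw [← Finset.sum_sub_distrib]
    calc |∑ i, (c i * Real.exp (-(B i)) * sigmoid ((∑ j, w i j * x j) + B i)
          - c i * Real.exp (∑ j, w i j * x j))|
        ≤ ∑ i, |c i * Real.exp (-(B i)) * sigmoid ((∑ j, w i j * x j) + B i)
          - c i * Real.exp (∑ j, w i j * x j)| := Finset.abs_sum_le_sum_abs _ _
      _ ≤ ∑ i, |c i| * δ := Finset.sum_le_sum fun i _ => hterm i
      _ = S * δ := by rw [hS, Finset.sum_mul]
  have hSδ : S * δ ≤ ε/2 := by
    have h1 : (S+1) * δ = ε/2 := by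
      rw [hδ]; field_simp
    nlinarith [hδpos.le]
  have hfx := hcw x hx
  calc |(∑ i, c i * Real.exp (-(B i)) * sigmoid ((∑ j, w i j * x j) + B i)) - f x|
      ≤ |(∑ i, c i * Real.exp (-(B i)) * sigmoid ((∑ j, w i j * x j) + B i))
          - (∑ i, c i * Real.exp (∑ j, w i j * x j))|
        + |(∑ i, c i * Real.exp (∑ j, w i j * x j)) - f x| := abs_sub_le _ _ _
    _ < ε := by linarith

/-- For any continuous `f` on the box `K = ∏ᵢ [mᵢ, Mᵢ]` and any `ε > 0` there are finite
linear combinations of sigmoids `Ψ_U` and `Ψ_L` with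
`0 ≤ Ψ_U(x) − f(x) ≤ ε` and `0 ≤ f(x) − Ψ_L(x) ≤ ε` on `K`. -/
theorem sigmoid_upper_lower_approximation
    (n : ℕ) (m M : Fin n → ℝ) (hmM : ∀ i, m i ≤ M i)
    (f : (Fin n → ℝ) → ℝ) (hf : Continuous f) (ε : ℝ) (hε : 0 < ε) :
    ∃ (NU : ℕ) (AU BU : Fin NU → ℝ) (CU : Fin NU → Fin n → ℝ)
      (NL : ℕ) (AL BL : Fin NL → ℝ) (CL : Fin NL → Fin n → ℝ),
      ∀ x ∈ Set.univ.pi (fun i => Set.Icc (m i) (M i)),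
        (0 ≤ (∑ i : Fin NU, AU i * sigmoid (∑ j : Fin n, CU i j * x j + BU i)) - f x ∧
          (∑ i : Fin NU, AU i * sigmoid (∑ j : Fin n, CU i j * x j + BU i)) - f x ≤ ε) ∧
        (0 ≤ f x - (∑ i : Fin NL, AL i * sigmoid (∑ j : Fin n, CL i j * x j + BL i)) ∧
          f x - (∑ i : Fin NL, AL i * sigmoid (∑ j : Fin n, CL i j * x j + BL i)) ≤ ε) := by
  obtain ⟨N, A, B, C, hABC⟩ := exists_sigmoid_sum_approx n m M f hf (ε/4) (by linarith)
  set AU : Fin (N+1) → ℝ := Fin.snoc A ε with hAU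
  set AL : Fin (N+1) → ℝ := Fin.snoc A (-ε) with hAL
  set B' : Fin (N+1) → ℝ := Fin.snoc B 0 with hB'
  set C' : Fin (N+1) → Fin n → ℝ := Fin.snoc C 0 with hC'
  refine ⟨N+1, AU, B', C', N+1, AL, B', C', fun x hx => ?_⟩
  have h := hABC x hx
  rw [abs_lt] at h
  have hsumU : (∑ i : Fin (N+1), AU i
        * sigmoid (∑ j : Fin n, C' i j * x j + B' i))
      = (∑ i : Fin N, A i * sigmoid (∑ j : Fin n, C i j * x j + B i)) + ε * (1/2) := by
    rw [Fin.sum_univ_castSucc]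
    congr 1
    · exact Finset.sum_congr rfl fun i _ => by simp [hAU, hAL, hB', hC']
    · simp [hAU, hAL, hB', hC', sigmoid_zero]
  have hsumL : (∑ i : Fin (N+1), AL i
        * sigmoid (∑ j : Fin n, C' i j * x j + B' i))
      = (∑ i : Fin N, A i * sigmoid (∑ j : Fin n, C i j * x j + B i)) + (-ε) * (1/2) := by
    rw [Fin.sum_univ_castSucc]
    congr 1
    · exact Finset.sum_congr rfl fun i _ => by simp [hAU, hAL, hB', hC']
    · simp [hAU, hAL, hB', hC', sigmoid_zero]
  rw [hsumU, hsumL]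
  constructor
  · constructor <;> linarith
  · constructor <;> linarith
end

section
/- Let B, C_L, C_U be Hermitian matrices in M_d(ℂ) with C_L positive semidefinite and C_L ≤ B ≤ C_U in the Loewner order. Assume 0 < λ_min(C_L) < λ_max(C_L) and 0 < λ_min(C_U) < λ_max(C_U). Then for every natural number p ≥ 2: (i) B^p ≥ 𝒦(λ_min(C_L), λ_max(C_L), p)⁻¹ · C_L^p, and (ii) B^p ≤ 𝒦(λ_min(C_U), λ_max(C_U), p) · C_U^p, both in the Loewner order. -/
open scoped ComplexOrder

/-- The Kantorovich function `𝒦(m, M, r)` for `0 < m < M` and real `r ≠ 1`. -/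
noncomputable def kantorovich (m M r : ℝ) : ℝ :=
  (m * M ^ r - M * m ^ r) / ((r - 1) * (M - m)) *
    ((r - 1) * (M ^ r - m ^ r) / (r * (m * M ^ r - M * m ^ r))) ^ r

/-- The smallest eigenvalue of a Hermitian matrix, as the infimum of its real spectrum. -/
noncomputable def lamMin {d : ℕ} (A : Matrix (Fin d) (Fin d) ℂ) : ℝ := sInf (spectrum ℝ A)

/-- The largest eigenvalue of a Hermitian matrix, as the supremum of its real spectrum. -/
noncomputable def lamMax {d : ℕ} (A : Matrix (Fin d) (Fin d) ℂ) : ℝ := sSup (spectrum ℝ A)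

section Machinery

open Matrix


/-- Data of a unitary diagonalization of a matrix with real diagonal. -/
structure SpecData (d : ℕ) (A : Matrix (Fin d) (Fin d) ℂ) where
  U : Matrix (Fin d) (Fin d) ℂ
  ev : Fin d → ℝ
  hU : star U * U = 1
  hU2 : U * star U = 1
  hA : A = U * Matrix.diagonal (fun i => ((ev i : ℝ) : ℂ)) * star U

namespace SpecData

variable {d : ℕ} {A : Matrix (Fin d) (Fin d) ℂ}

lemma pow_eq (S : SpecData d A) (k : ℕ) :
    A ^ k = S.U * Matrix.diagonal (fun i => ((S.ev i ^ k : ℝ) : ℂ)) * star S.U := by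
  obtain ⟨U, ev, hU, hU2, hA⟩ := S
  subst hA
  induction k with
  | zero => simp [pow_zero, Matrix.diagonal_one, hU2]
  | succ k ih =>
      rw [pow_succ, ih]
      have h : (U * diagonal (fun i => ((ev i ^ k : ℝ) : ℂ)) * star U) *
          (U * diagonal (fun i => ((ev i : ℝ) : ℂ)) * star U)
          = U * (diagonal (fun i => ((ev i ^ k : ℝ) : ℂ)) *
            diagonal (fun i => ((ev i : ℝ) : ℂ))) * star U := by
        simp only [Matrix.mul_assoc]
        rw [← Matrix.mul_assoc (star U) U, hU, Matrix.one_mul]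
      rw [h, Matrix.diagonal_mul_diagonal]
      have h2 : (fun i => ((ev i ^ k : ℝ) : ℂ) * ((ev i : ℝ) : ℂ))
          = fun i => ((ev i ^ (k+1) : ℝ) : ℂ) := by
        funext i; push_cast; ring
      rw [h2]

lemma isHermitian (S : SpecData d A) : A.IsHermitian := by
  obtain ⟨U, ev, hU, hU2, hA⟩ := S
  subst hA
  have h : (star fun i => ((ev i : ℝ) : ℂ)) = fun i => ((ev i : ℝ) : ℂ) := by
    funext i; simp
  show _ = _
  simp [Matrix.conjTranspose_mul, Matrix.diagonal_conjTranspose, h, Matrix.mul_assoc,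
    Matrix.star_eq_conjTranspose]

/-- weights associated to a vector -/
noncomputable def w (S : SpecData d A) (x : Fin d → ℂ) (i : Fin d) : ℝ :=
  Complex.normSq ((star S.U *ᵥ x) i)

lemma w_nonneg (S : SpecData d A) (x : Fin d → ℂ) (i : Fin d) : 0 ≤ S.w x i :=
  Complex.normSq_nonneg _

lemma form (S : SpecData d A) (x : Fin d → ℂ) (k : ℕ) :
    star x ⬝ᵥ (A ^ k) *ᵥ x = ((∑ i, S.w x i * S.ev i ^ k : ℝ) : ℂ) := by
  rw [S.pow_eq k]
  set y := star S.U *ᵥ x with hy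
  have h1 : star x ᵥ* S.U = star y := by
    rw [hy, star_mulVec, Matrix.star_eq_conjTranspose, Matrix.conjTranspose_conjTranspose]
  calc star x ⬝ᵥ (S.U * diagonal (fun i => ((S.ev i ^ k : ℝ) : ℂ)) * star S.U) *ᵥ x
      = (star x ᵥ* S.U) ⬝ᵥ (diagonal (fun i => ((S.ev i ^ k : ℝ) : ℂ)) * star S.U) *ᵥ x := by
        rw [Matrix.mul_assoc, ← mulVec_mulVec, dotProduct_mulVec, dotProduct_mulVec,
          vecMul_vecMul]
    _ = star y ⬝ᵥ (diagonal (fun i => ((S.ev i ^ k : ℝ) : ℂ))) *ᵥ y := by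
        rw [h1, ← mulVec_mulVec]
    _ = ((∑ i, S.w x i * S.ev i ^ k : ℝ) : ℂ) := by
        rw [dotProduct, Complex.ofReal_sum]
        congr 1
        ext i
        rw [mulVec_diagonal]
        simp only [Pi.star_apply, w, ← hy]
        push_cast
        rw [← Complex.mul_conj]
        simp only [Complex.star_def]
        ring

end SpecData

lemma realSmul_isHermitian {d : ℕ} {M : Matrix (Fin d) (Fin d) ℂ} (c : ℝ)
    (h : M.IsHermitian) : (c • M).IsHermitian := by
  show _ = _
  rw [Matrix.conjTranspose_smul, h]
  simp

lemma realSmul_posSemidef {d : ℕ} {M : Matrix (Fin d) (Fin d) ℂ} {c : ℝ}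
    (hc : 0 ≤ c) (h : M.PosSemidef) : (c • M).PosSemidef := by
  refine Matrix.PosSemidef.of_dotProduct_mulVec_nonneg (realSmul_isHermitian c h.1) fun x => ?_
  rw [smul_mulVec, dotProduct_smul, Complex.real_smul]
  exact mul_nonneg (by exact_mod_cast hc) (h.dotProduct_mulVec_nonneg x)

/-- Hermitian transfer across a Hermitian matrix in a sesquilinear form. -/
lemma dotHerm {d : ℕ} {X : Matrix (Fin d) (Fin d) ℂ} (hX : X.IsHermitian)
    (a b : Fin d → ℂ) : star a ⬝ᵥ X *ᵥ b = star (X *ᵥ a) ⬝ᵥ b := by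
  rw [star_mulVec, dotProduct_mulVec]
  congr 1
  rw [show Xᴴ = X from hX]

namespace SpecData

variable {d : ℕ} {A : Matrix (Fin d) (Fin d) ℂ}

/-- Build `SpecData` from a Hermitian matrix. -/
noncomputable def ofHermitian (hA : A.IsHermitian) : SpecData d A where
  U := (Matrix.IsHermitian.eigenvectorUnitary hA : Matrix (Fin d) (Fin d) ℂ)
  ev := hA.eigenvalues
  hU := (Matrix.mem_unitaryGroup_iff').mp (Matrix.IsHermitian.eigenvectorUnitary hA).2
  hU2 := (Matrix.mem_unitaryGroup_iff).mp (Matrix.IsHermitian.eigenvectorUnitary hA).2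
  hA := hA.spectral_theorem

@[simp] lemma ofHermitian_ev (hA : A.IsHermitian) : (ofHermitian hA).ev = hA.eigenvalues := rfl

lemma form_one (S : SpecData d A) (x : Fin d → ℂ) :
    star x ⬝ᵥ A *ᵥ x = ((∑ i, S.w x i * S.ev i : ℝ) : ℂ) := by
  have h := S.form x 1
  simpa using h

lemma form_zero (S : SpecData d A) (x : Fin d → ℂ) :
    star x ⬝ᵥ x = ((∑ i, S.w x i : ℝ) : ℂ) := by
  have h := S.form x 0
  simpa using h

/-- inverse matrix of a `SpecData` with nonvanishing diagonal -/
lemma inv_mul_cancel (S : SpecData d A) (h : ∀ i, S.ev i ≠ 0) :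
    (S.U * Matrix.diagonal (fun i => (((S.ev i)⁻¹ : ℝ) : ℂ)) * star S.U) * A = 1 := by
  obtain ⟨U, ev, hU, hU2, rfl⟩ := S
  dsimp only
  have hmid : Matrix.diagonal (fun i => (((ev i)⁻¹ : ℝ) : ℂ)) *
      Matrix.diagonal (fun i => ((ev i : ℝ) : ℂ)) = 1 := by
    rw [Matrix.diagonal_mul_diagonal]
    have : (fun i => (((ev i)⁻¹ : ℝ) : ℂ) * ((ev i : ℝ) : ℂ)) = fun _ => 1 := by
      funext i
      rw [← Complex.ofReal_mul, inv_mul_cancel₀ (h i)]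
      simp
    rw [this, Matrix.diagonal_one]
  calc (U * Matrix.diagonal (fun i => (((ev i)⁻¹ : ℝ) : ℂ)) * star U) *
        (U * Matrix.diagonal (fun i => ((ev i : ℝ) : ℂ)) * star U)
      = U * (Matrix.diagonal (fun i => (((ev i)⁻¹ : ℝ) : ℂ)) *
          Matrix.diagonal (fun i => ((ev i : ℝ) : ℂ))) * star U := by
        simp only [Matrix.mul_assoc]
        rw [← Matrix.mul_assoc (star U) U, hU, Matrix.one_mul]
    _ = 1 := by rw [hmid, Matrix.mul_one, hU2]

noncomputable def inv (S : SpecData d A) (h : ∀ i, S.ev i ≠ 0) : SpecData d A⁻¹ where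
  U := S.U
  ev := fun i => (S.ev i)⁻¹
  hU := S.hU
  hU2 := S.hU2
  hA := Matrix.inv_eq_left_inv (S.inv_mul_cancel h)

lemma mul_inv_cancel' (S : SpecData d A) (h : ∀ i, S.ev i ≠ 0) : A * A⁻¹ = 1 := by
  rw [Matrix.inv_eq_left_inv (S.inv_mul_cancel h)]
  exact mul_eq_one_comm.mp (S.inv_mul_cancel h)

lemma inv_mul_cancel'' (S : SpecData d A) (h : ∀ i, S.ev i ≠ 0) : A⁻¹ * A = 1 := by
  rw [Matrix.inv_eq_left_inv (S.inv_mul_cancel h)]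
  exact S.inv_mul_cancel h

lemma posSemidef_pow (S : SpecData d A) (h : ∀ i, 0 ≤ S.ev i) (k : ℕ) :
    (A ^ k).PosSemidef := by
  refine Matrix.PosSemidef.of_dotProduct_mulVec_nonneg (S.isHermitian.pow k) fun x => ?_
  rw [S.form x k]
  rw [Complex.zero_le_real]
  exact Finset.sum_nonneg fun i _ => mul_nonneg (S.w_nonneg x i) (pow_nonneg (h i) k)

lemma sub_smul_one_posSemidef (S : SpecData d A) {a : ℝ} (h : ∀ i, a ≤ S.ev i) :
    (A - a • 1).PosSemidef := by
  refine Matrix.PosSemidef.of_dotProduct_mulVec_nonneg (S.isHermitian.sub (realSmul_isHermitian a Matrix.isHermitian_one)) fun x => ?_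
  rw [Matrix.sub_mulVec, dotProduct_sub, smul_mulVec, Matrix.one_mulVec,
    dotProduct_smul, S.form_one, S.form_zero, Complex.real_smul, ← Complex.ofReal_mul,
    ← Complex.ofReal_sub, Complex.zero_le_real, Finset.mul_sum, ← Finset.sum_sub_distrib]
  exact Finset.sum_nonneg fun i _ => by nlinarith [S.w_nonneg x i, h i]

lemma smul_one_sub_posSemidef (S : SpecData d A) {a : ℝ} (h : ∀ i, S.ev i ≤ a) :
    (a • 1 - A).PosSemidef := by
  refine Matrix.PosSemidef.of_dotProduct_mulVec_nonneg ((realSmul_isHermitian a Matrix.isHermitian_one).sub S.isHermitian) fun x => ?_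
  rw [Matrix.sub_mulVec, dotProduct_sub, smul_mulVec, Matrix.one_mulVec,
    dotProduct_smul, S.form_one, S.form_zero, Complex.real_smul, ← Complex.ofReal_mul,
    ← Complex.ofReal_sub, Complex.zero_le_real, Finset.mul_sum, ← Finset.sum_sub_distrib]
  exact Finset.sum_nonneg fun i _ => by nlinarith [S.w_nonneg x i, h i]

lemma form_single (S : SpecData d A) (i : Fin d) (k : ℕ) :
    star (S.U *ᵥ Pi.single i 1) ⬝ᵥ (A ^ k) *ᵥ (S.U *ᵥ Pi.single i 1) = ((S.ev i ^ k : ℝ) : ℂ) := by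
  rw [S.form]
  have hy : star S.U *ᵥ (S.U *ᵥ Pi.single i 1) = Pi.single i 1 := by
    rw [mulVec_mulVec, S.hU, Matrix.one_mulVec]
  have hw : ∀ j, S.w (S.U *ᵥ Pi.single i 1) j = Complex.normSq (Pi.single (M := fun _ => ℂ) i 1 j) := by
    intro j
    rw [SpecData.w, hy]
  congr 1
  rw [Finset.sum_eq_single i]
  · rw [hw i]
    simp
  · intro j _ hji
    rw [hw j]
    simp [Pi.single_apply, hji]
  · intro hi
    exact absurd (Finset.mem_univ i) hi

lemma ev_le_of_loewner (S : SpecData d A) {a : ℝ} (hpsd : (A - a • 1).PosSemidef) (i : Fin d) :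
    a ≤ S.ev i := by
  have h2 := hpsd.dotProduct_mulVec_nonneg (S.U *ᵥ Pi.single i 1)
  rw [Matrix.sub_mulVec, dotProduct_sub, smul_mulVec, Matrix.one_mulVec,
    dotProduct_smul] at h2
  have h1 : star (S.U *ᵥ Pi.single i 1) ⬝ᵥ A *ᵥ (S.U *ᵥ Pi.single i 1) = ((S.ev i : ℝ) : ℂ) := by
    have := S.form_single i 1
    simpa using this
  have h0 : star (S.U *ᵥ Pi.single i 1) ⬝ᵥ (S.U *ᵥ Pi.single i 1) = ((1 : ℝ) : ℂ) := by
    have := S.form_single i 0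
    simpa using this
  rw [h1, h0, Complex.real_smul, ← Complex.ofReal_mul, ← Complex.ofReal_sub,
    Complex.zero_le_real] at h2
  linarith

lemma ev_ge_of_loewner (S : SpecData d A) {a : ℝ} (hpsd : (a • 1 - A).PosSemidef) (i : Fin d) :
    S.ev i ≤ a := by
  have h2 := hpsd.dotProduct_mulVec_nonneg (S.U *ᵥ Pi.single i 1)
  rw [Matrix.sub_mulVec, dotProduct_sub, smul_mulVec, Matrix.one_mulVec,
    dotProduct_smul] at h2
  have h1 : star (S.U *ᵥ Pi.single i 1) ⬝ᵥ A *ᵥ (S.U *ᵥ Pi.single i 1) = ((S.ev i : ℝ) : ℂ) := by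
    have := S.form_single i 1
    simpa using this
  have h0 : star (S.U *ᵥ Pi.single i 1) ⬝ᵥ (S.U *ᵥ Pi.single i 1) = ((1 : ℝ) : ℂ) := by
    have := S.form_single i 0
    simpa using this
  rw [h1, h0, Complex.real_smul, ← Complex.ofReal_mul, ← Complex.ofReal_sub,
    Complex.zero_le_real] at h2
  linarith

end SpecData

/-- normal form of the Kantorovich constant -/
noncomputable def Kab (μ ν' : ℝ) (p : ℕ) : ℝ :=
  ν' / ((p : ℝ) - 1) * (((p : ℝ) - 1) * μ / ((p : ℝ) * ν')) ^ p

/-- tangent line inequality for convex powers -/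
lemma tangent_pow {a b : ℝ} (ha : 0 ≤ a) (hb : 0 ≤ b) {n : ℕ} (hn : 1 ≤ n) :
    b ^ n + (n : ℝ) * b ^ (n - 1) * (a - b) ≤ a ^ n := by
  have hgeom : (∑ i ∈ Finset.range n, a ^ i * b ^ (n - 1 - i)) * (a - b) = a ^ n - b ^ n :=
    geom_sum₂_mul a b n
  have hterm : ∀ i ∈ Finset.range n, a ^ i * b ^ (n - 1 - i) *
      (if b ≤ a then 1 else 1) = a ^ i * b ^ (n - 1 - i) := by intros; simp
  rcases le_or_gt b a with hba | hab
  · have hsum : (n : ℝ) * b ^ (n - 1) ≤ ∑ i ∈ Finset.range n, a ^ i * b ^ (n - 1 - i) := by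
      calc (n : ℝ) * b ^ (n - 1) = ∑ _i ∈ Finset.range n, b ^ (n - 1) := by
            rw [Finset.sum_const, Finset.card_range, nsmul_eq_mul]
        _ ≤ ∑ i ∈ Finset.range n, a ^ i * b ^ (n - 1 - i) := by
            apply Finset.sum_le_sum
            intro i hi
            have hi' : i < n := Finset.mem_range.mp hi
            have : b ^ (n - 1) = b ^ i * b ^ (n - 1 - i) := by
              rw [← pow_add]
              congr 1
              omega
            rw [this]
            exact mul_le_mul_of_nonneg_right (pow_le_pow_left₀ hb hba i) (pow_nonneg hb _)
    nlinarith [sub_nonneg.mpr hba, hgeom]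
  · have hsum : (∑ i ∈ Finset.range n, a ^ i * b ^ (n - 1 - i)) ≤ (n : ℝ) * b ^ (n - 1) := by
      calc (∑ i ∈ Finset.range n, a ^ i * b ^ (n - 1 - i))
          ≤ ∑ _i ∈ Finset.range n, b ^ (n - 1) := by
            apply Finset.sum_le_sum
            intro i hi
            have hi' : i < n := Finset.mem_range.mp hi
            have hbn : b ^ (n - 1) = b ^ i * b ^ (n - 1 - i) := by
              rw [← pow_add]; congr 1; omega
            rw [hbn]
            exact mul_le_mul_of_nonneg_right (pow_le_pow_left₀ ha hab.le i) (pow_nonneg hb _)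
        _ = (n : ℝ) * b ^ (n - 1) := by rw [Finset.sum_const, Finset.card_range, nsmul_eq_mul]
    nlinarith [sub_nonneg.mpr hab.le, hgeom]

lemma Kab_pos {μ ν' : ℝ} (hμ : 0 < μ) (hν : 0 < ν') {p : ℕ} (hp : 2 ≤ p) :
    0 < Kab μ ν' p := by
  have hq : (1 : ℝ) < (p : ℝ) := by exact_mod_cast Nat.lt_of_lt_of_le one_lt_two hp
  have h1 : (0:ℝ) < ν' / ((p : ℝ) - 1) := div_pos hν (by linarith)
  have h2 : (0:ℝ) < ((p : ℝ) - 1) * μ / ((p : ℝ) * ν') :=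
    div_pos (mul_pos (by linarith) hμ) (mul_pos (by linarith) hν)
  exact mul_pos h1 (pow_pos h2 p)

/-- The key scalar inequality: the line `μ t - ν'` lies below `Kab μ ν' p * t ^ p` on `t > 0`. -/
lemma Kab_line_le {μ ν' : ℝ} (hμ : 0 < μ) (hν : 0 < ν') {p : ℕ} (hp : 2 ≤ p)
    {t : ℝ} (ht : 0 < t) : μ * t - ν' ≤ Kab μ ν' p * t ^ p := by
  have hq : (1 : ℝ) < (p : ℝ) := by exact_mod_cast Nat.lt_of_lt_of_le one_lt_two hp
  set q : ℝ := (p : ℝ) with hqdef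
  have hq1 : q - 1 ≠ 0 := by simp only [hqdef]; intro h; linarith
  have hq0 : q ≠ 0 := by simp only [hqdef]; intro h; linarith
  set ts : ℝ := q * ν' / ((q - 1) * μ) with hts
  have hts_pos : 0 < ts := div_pos (mul_pos (by linarith) hν) (mul_pos (by simp only [hqdef]; linarith) hμ)
  set K : ℝ := Kab μ ν' p with hK
  have hKpos : 0 < K := Kab_pos hμ hν hp
  have hbase : (q - 1) * μ / (q * ν') * ts = 1 := by
    rw [hts]
    field_simp
  have id1 : K * ts ^ p = ν' / (q - 1) := by
    rw [hK, Kab]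
    have : ((q - 1) * μ / (q * ν')) ^ p * ts ^ p = 1 := by
      rw [← mul_pow, hbase, one_pow]
    calc ν' / (q - 1) * ((q - 1) * μ / (q * ν')) ^ p * ts ^ p
        = ν' / (q - 1) * (((q - 1) * μ / (q * ν')) ^ p * ts ^ p) := by ring
      _ = ν' / (q - 1) := by rw [this, mul_one]
  have hts_pow : ts ^ (p - 1) * ts = ts ^ p := by
    rw [← pow_succ]
    congr 1
    omega
  have id3 : μ * ts = q * ν' / (q - 1) := by
    rw [hts]
    field_simp
  have id2 : K * (q * ts ^ (p - 1)) = μ := by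
    have h : K * (q * ts ^ (p - 1)) * ts = μ * ts := by
      calc K * (q * ts ^ (p - 1)) * ts = q * (K * (ts ^ (p - 1) * ts)) := by ring
        _ = q * (K * ts ^ p) := by rw [hts_pow]
        _ = q * (ν' / (q - 1)) := by rw [id1]
        _ = μ * ts := by rw [id3]; ring
    exact mul_right_cancel₀ (ne_of_gt hts_pos) h
  have htangent : ts ^ p + q * ts ^ (p - 1) * (t - ts) ≤ t ^ p := by
    have := tangent_pow ht.le hts_pos.le (n := p) (by omega)
    simpa [hqdef] using this
  have hmul : K * (ts ^ p + q * ts ^ (p - 1) * (t - ts)) ≤ K * t ^ p :=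
    mul_le_mul_of_nonneg_left htangent hKpos.le
  have hexpand : K * (ts ^ p + q * ts ^ (p - 1) * (t - ts))
      = ν' / (q - 1) + μ * t - μ * ts := by
    calc K * (ts ^ p + q * ts ^ (p - 1) * (t - ts))
        = K * ts ^ p + (K * (q * ts ^ (p - 1))) * t - (K * (q * ts ^ (p - 1))) * ts := by ring
      _ = ν' / (q - 1) + μ * t - μ * ts := by rw [id1, id2]
  have hfinal : ν' / (q - 1) + μ * t - μ * ts = μ * t - ν' := by
    rw [id3]
    field_simp
    ring
  linarith [hmul, hexpand, hfinal]

lemma nu'_pos {m M : ℝ} (hm : 0 < m) (hmM : m < M) {p : ℕ} (hp : 2 ≤ p) :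
    0 < m * M ^ p - M * m ^ p := by
  obtain ⟨k, rfl⟩ : ∃ k, p = k + 2 := ⟨p - 2, by omega⟩
  have h1 : m ^ (k + 1) < M ^ (k + 1) := pow_lt_pow_left₀ hmM hm.le (by omega)
  have h2 : m * M ^ (k + 2) - M * m ^ (k + 2) = m * M * (M ^ (k + 1) - m ^ (k + 1)) := by ring
  rw [h2]
  exact mul_pos (mul_pos hm (lt_trans hm hmM)) (by linarith)

lemma mu_pos {m M : ℝ} (hm : 0 < m) (hmM : m < M) {p : ℕ} (hp : 2 ≤ p) :
    0 < (M ^ p - m ^ p) / (M - m) := by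
  have h1 : m ^ p < M ^ p := pow_lt_pow_left₀ hmM hm.le (by omega)
  exact div_pos (by linarith) (by linarith)

lemma kant_eq {m M : ℝ} (hm : 0 < m) (hmM : m < M) {p : ℕ} (hp : 2 ≤ p) :
    kantorovich m M (p : ℝ)
      = Kab ((M ^ p - m ^ p) / (M - m)) ((m * M ^ p - M * m ^ p) / (M - m)) p := by
  have hMm : M - m ≠ 0 := by linarith
  have hq : (1 : ℝ) < (p : ℝ) := by exact_mod_cast Nat.lt_of_lt_of_le one_lt_two hp
  rw [kantorovich, Kab]
  simp only [Real.rpow_natCast]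
  have hν0 : m * M ^ p - M * m ^ p ≠ 0 := (nu'_pos hm hmM hp).ne'
  have hp0 : (p:ℝ) ≠ 0 := by intro h; rw [h] at hq; linarith
  have hp1 : (p:ℝ) - 1 ≠ 0 := by intro h; linarith
  have h1 : (m * M ^ p - M * m ^ p) / (((p:ℝ) - 1) * (M - m))
      = (m * M ^ p - M * m ^ p) / (M - m) / ((p:ℝ) - 1) := by
    rw [div_mul_eq_div_div_swap]
  have h2 : ((p:ℝ) - 1) * (M ^ p - m ^ p) / ((p:ℝ) * (m * M ^ p - M * m ^ p))
      = ((p:ℝ) - 1) * ((M ^ p - m ^ p) / (M - m)) /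
        ((p:ℝ) * ((m * M ^ p - M * m ^ p) / (M - m))) := by
    field_simp
  rw [h1, h2]

lemma kant_pos {m M : ℝ} (hm : 0 < m) (hmM : m < M) {p : ℕ} (hp : 2 ≤ p) :
    0 < kantorovich m M (p : ℝ) := by
  rw [kant_eq hm hmM hp]
  exact Kab_pos (mu_pos hm hmM hp) (div_pos (nu'_pos hm hmM hp) (by linarith)) hp

/-- main scalar inequality, original interval -/
lemma kant_line (m M : ℝ) (hm : 0 < m) (hmM : m < M) {p : ℕ} (hp : 2 ≤ p)
    {t : ℝ} (ht : 0 < t) :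
    (M ^ p - m ^ p) / (M - m) * t + (M * m ^ p - m * M ^ p) / (M - m)
      ≤ kantorovich m M (p : ℝ) * t ^ p := by
  have hMm : (0:ℝ) < M - m := by linarith
  have h := Kab_line_le (mu_pos hm hmM hp)
    (div_pos (nu'_pos hm hmM hp) hMm) hp ht
  rw [kant_eq hm hmM hp]
  have hrw : (M * m ^ p - m * M ^ p) / (M - m) = -((m * M ^ p - M * m ^ p) / (M - m)) := by ring
  rw [hrw]
  linarith [h]

lemma Kab_scale {μ ν' c e : ℝ} (hc : c ≠ 0) (hν : ν' ≠ 0) {p : ℕ} (hp : 2 ≤ p) :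
    Kab (c * e * μ) (c * ν') p = c * e ^ p * Kab μ ν' p := by
  have hq : (1 : ℝ) < (p : ℝ) := by exact_mod_cast Nat.lt_of_lt_of_le one_lt_two hp
  have hq1 : (p:ℝ) - 1 ≠ 0 := by intro h; linarith
  have hq0 : (p:ℝ) ≠ 0 := by intro h; linarith
  rw [Kab, Kab]
  have hbase : ((p:ℝ) - 1) * (c * e * μ) / ((p:ℝ) * (c * ν'))
      = e * (((p:ℝ) - 1) * μ / ((p:ℝ) * ν')) := by
    field_simp
  rw [hbase, mul_pow]
  field_simp

/-- main scalar inequality for the inverted interval, with the same Kantorovich constant -/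
lemma kant_line_inv (m M : ℝ) (hm : 0 < m) (hmM : m < M) {p : ℕ} (hp : 2 ≤ p)
    {t : ℝ} (ht : 0 < t) :
    ((m⁻¹) ^ p - (M⁻¹) ^ p) / (m⁻¹ - M⁻¹) * t + ((m⁻¹) * (M⁻¹) ^ p - (M⁻¹) * (m⁻¹) ^ p) / (m⁻¹ - M⁻¹)
      ≤ kantorovich m M (p : ℝ) * t ^ p := by
  have hM : 0 < M := lt_trans hm hmM
  have hMm : (0:ℝ) < M - m := by linarith
  have ha : m ^ p ≠ 0 := pow_ne_zero _ hm.ne'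
  have hb : M ^ p ≠ 0 := pow_ne_zero _ hM.ne'
  have hinv : m⁻¹ - M⁻¹ ≠ 0 := by
    have : M⁻¹ < m⁻¹ := by exact inv_strictAnti₀ hm hmM
    linarith
  set μ : ℝ := (M ^ p - m ^ p) / (M - m) with hμdef
  set ν' : ℝ := (m * M ^ p - M * m ^ p) / (M - m) with hνdef
  set c : ℝ := (m ^ p * M ^ p)⁻¹ with hcdef
  have hc : c ≠ 0 := inv_ne_zero (mul_ne_zero ha hb)
  have hcpos : 0 < c := by
    rw [hcdef]
    exact inv_pos.mpr (mul_pos (pow_pos hm p) (pow_pos hM p))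
  have hμpos : 0 < μ := mu_pos hm hmM hp
  have hνpos : 0 < ν' := div_pos (nu'_pos hm hmM hp) hMm
  have hmuinv : ((m⁻¹) ^ p - (M⁻¹) ^ p) / (m⁻¹ - M⁻¹) = c * (m * M) * μ := by
    rw [hcdef, hμdef, inv_pow, inv_pow]
    field_simp
  have hnuinv : ((M⁻¹) * (m⁻¹) ^ p - (m⁻¹) * (M⁻¹) ^ p) / (m⁻¹ - M⁻¹) = c * ν' := by
    rw [hcdef, hνdef, inv_pow, inv_pow]
    field_simp
  have hKeq : Kab (c * (m * M) * μ) (c * ν') p = Kab μ ν' p := by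
    rw [Kab_scale hc hνpos.ne' hp]
    have : c * (m * M) ^ p = 1 := by
      rw [hcdef, mul_pow]
      field_simp
    rw [this, one_mul]
  have h := Kab_line_le (by positivity : 0 < c * (m * M) * μ) (by positivity : 0 < c * ν') hp ht
  rw [hKeq, ← kant_eq hm hmM hp] at h
  rw [hmuinv]
  have hrw : ((m⁻¹) * (M⁻¹) ^ p - (M⁻¹) * (m⁻¹) ^ p) / (m⁻¹ - M⁻¹) = -(c * ν') := by
    rw [← hnuinv]; ring
  rw [hrw]
  linarith [h]



lemma chord_le {m M : ℝ} (hm : 0 ≤ m) (hmM : m < M) (p : ℕ) {lam : ℝ}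
    (hl : lam ∈ Set.Icc m M) :
    lam ^ p ≤ (M ^ p - m ^ p) / (M - m) * lam + (M * m ^ p - m * M ^ p) / (M - m) := by
  have hMm : (0:ℝ) < M - m := by linarith
  obtain ⟨h1, h2⟩ := hl
  set a : ℝ := (M - lam) / (M - m) with hadef
  set b : ℝ := (lam - m) / (M - m) with hbdef
  have ha : 0 ≤ a := div_nonneg (by linarith) hMm.le
  have hb : 0 ≤ b := div_nonneg (by linarith) hMm.le
  have hab : a + b = 1 := by rw [hadef, hbdef]; field_simp; ring
  have hcomb : a * m + b * M = lam := by rw [hadef, hbdef]; field_simp; ring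
  have hconv := (convexOn_pow p).2 (Set.mem_Ici.mpr hm)
    (Set.mem_Ici.mpr (le_trans hm (le_of_lt hmM))) ha hb hab
  rw [smul_eq_mul, smul_eq_mul, smul_eq_mul, smul_eq_mul, hcomb] at hconv
  have hrhs : a * m ^ p + b * M ^ p
      = (M ^ p - m ^ p) / (M - m) * lam + (M * m ^ p - m * M ^ p) / (M - m) := by
    rw [hadef, hbdef]
    field_simp
    ring
  linarith [hconv, hrhs]

/-- The core Kantorovich-type operator inequality. -/
lemma core_lemma {d : ℕ} {A B : Matrix (Fin d) (Fin d) ℂ} (SA : SpecData d A)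
    (SB : SpecData d B) {m M K : ℝ} (hm : 0 < m) (hmM : m < M) (hK : 0 < K)
    (hevA : ∀ i, SA.ev i ∈ Set.Icc m M) (hevB : ∀ i, 0 ≤ SB.ev i)
    (hAB : (B - A).PosSemidef) {p : ℕ} (hp : 2 ≤ p)
    (hKineq : ∀ t : ℝ, 0 < t →
      (M ^ p - m ^ p) / (M - m) * t + (M * m ^ p - m * M ^ p) / (M - m) ≤ K * t ^ p) :
    (B ^ p - K⁻¹ • A ^ p).PosSemidef := by
  refine Matrix.PosSemidef.of_dotProduct_mulVec_nonneg ((SB.isHermitian.pow p).sub (realSmul_isHermitian _ (SA.isHermitian.pow p))) fun x => ?_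
  rw [Matrix.sub_mulVec, dotProduct_sub, smul_mulVec, dotProduct_smul,
    SA.form x p, SB.form x p, Complex.real_smul, ← Complex.ofReal_mul,
    ← Complex.ofReal_sub, Complex.zero_le_real]
  set wA := SA.w x with hwA
  set wB := SB.w x with hwB
  set s : ℝ := ∑ i, wA i with hs
  have hs_nonneg : 0 ≤ s := Finset.sum_nonneg fun i _ => SA.w_nonneg x i
  have hsum_eq : ∑ i, wB i = s := by
    have h0A := SA.form_zero x
    have h0B := SB.form_zero x
    rw [h0A] at h0B
    exact_mod_cast h0B.symm
  rcases eq_or_lt_of_le hs_nonneg with hs0 | hspos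
  · -- all weights vanish
    have hA0 : ∀ i ∈ Finset.univ, wA i = 0 :=
      (Finset.sum_eq_zero_iff_of_nonneg (fun i _ => SA.w_nonneg x i)).mp hs0.symm
    have hB0 : ∀ i ∈ Finset.univ, wB i = 0 :=
      (Finset.sum_eq_zero_iff_of_nonneg (fun i _ => SB.w_nonneg x i)).mp
        (by rw [hsum_eq]; exact hs0.symm)
    have e1 : ∑ i, wA i * SA.ev i ^ p = 0 :=
      Finset.sum_eq_zero fun i hi => by rw [hA0 i hi, zero_mul]
    have e2 : ∑ i, wB i * SB.ev i ^ p = 0 :=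
      Finset.sum_eq_zero fun i hi => by rw [hB0 i hi, zero_mul]
    rw [e1, e2]
    simp
  · set tA : ℝ := ∑ i, wA i * SA.ev i with htA
    set tB : ℝ := ∑ i, wB i * SB.ev i with htB
    have htAB : tA ≤ tB := by
      have h2 := hAB.dotProduct_mulVec_nonneg x
      rw [Matrix.sub_mulVec, dotProduct_sub, SA.form_one, SB.form_one,
        ← Complex.ofReal_sub, Complex.zero_le_real] at h2
      rw [htA, htB]
      linarith
    have htA_lb : m * s ≤ tA := by
      rw [htA, hs, Finset.mul_sum]
      apply Finset.sum_le_sum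
      intro i _
      have := (hevA i).1
      nlinarith [SA.w_nonneg x i]
    have htA_pos : 0 < tA := lt_of_lt_of_le (mul_pos hm hspos) htA_lb
    have htB_pos : 0 < tB := lt_of_lt_of_le htA_pos htAB
    -- Jensen for B
    have hJensen : (tB / s) ^ p ≤ (∑ i, wB i * SB.ev i ^ p) / s := by
      have h := Real.pow_arith_mean_le_arith_mean_pow Finset.univ (fun i => wB i / s) SB.ev
        (fun i _ => div_nonneg (SB.w_nonneg x i) hs_nonneg)
        (by rw [← Finset.sum_div, hsum_eq]; field_simp)
        (fun i _ => hevB i) p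
      have e1 : ∑ i, wB i / s * SB.ev i = tB / s := by
        rw [htB, Finset.sum_div]
        congr 1
        funext i
        ring
      have e2 : ∑ i, wB i / s * SB.ev i ^ p = (∑ i, wB i * SB.ev i ^ p) / s := by
        rw [Finset.sum_div]
        congr 1
        funext i
        ring
      rwa [e1, e2] at h
    -- chord for A
    have hchord : ∑ i, wA i * SA.ev i ^ p
        ≤ (M ^ p - m ^ p) / (M - m) * tA + (M * m ^ p - m * M ^ p) / (M - m) * s := by
      rw [htA, hs, Finset.mul_sum, Finset.mul_sum, ← Finset.sum_add_distrib]
      apply Finset.sum_le_sum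
      intro i _
      have hc := chord_le hm.le hmM p (hevA i)
      have hw := SA.w_nonneg x i
      calc wA i * SA.ev i ^ p
          ≤ wA i * ((M ^ p - m ^ p) / (M - m) * SA.ev i + (M * m ^ p - m * M ^ p) / (M - m)) :=
            mul_le_mul_of_nonneg_left hc hw
        _ = (M ^ p - m ^ p) / (M - m) * (wA i * SA.ev i)
            + (M * m ^ p - m * M ^ p) / (M - m) * wA i := by ring
    -- scalar Kantorovich at t = tA / s
    have htdiv : 0 < tA / s := div_pos htA_pos hspos
    have hscalar := hKineq (tA / s) htdiv
    have hscalar' : (M ^ p - m ^ p) / (M - m) * tA + (M * m ^ p - m * M ^ p) / (M - m) * s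
        ≤ K * (s * (tA / s) ^ p) := by
      have := mul_le_mul_of_nonneg_left hscalar hs_nonneg
      calc (M ^ p - m ^ p) / (M - m) * tA + (M * m ^ p - m * M ^ p) / (M - m) * s
          = s * ((M ^ p - m ^ p) / (M - m) * (tA / s) + (M * m ^ p - m * M ^ p) / (M - m)) := by
            field_simp [hspos.ne', (sub_pos.mpr hmM).ne']
        _ ≤ s * (K * (tA / s) ^ p) := this
        _ = K * (s * (tA / s) ^ p) := by ring
    -- monotonicity of powers
    have hmono : s * (tA / s) ^ p ≤ s * (tB / s) ^ p := by
      apply mul_le_mul_of_nonneg_left _ hs_nonneg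
      have hdd : tA / s ≤ tB / s := by gcongr
      exact pow_le_pow_left₀ htdiv.le hdd p
    have hBlow : s * (tB / s) ^ p ≤ ∑ i, wB i * SB.ev i ^ p := by
      have := mul_le_mul_of_nonneg_left hJensen hs_nonneg
      calc s * (tB / s) ^ p ≤ s * ((∑ i, wB i * SB.ev i ^ p) / s) := this
        _ = ∑ i, wB i * SB.ev i ^ p := by field_simp
    have hfin : K⁻¹ * (∑ i, wA i * SA.ev i ^ p) ≤ s * (tA / s) ^ p := by
      rw [inv_mul_le_iff₀ hK]
      calc ∑ i, wA i * SA.ev i ^ p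
          ≤ (M ^ p - m ^ p) / (M - m) * tA + (M * m ^ p - m * M ^ p) / (M - m) * s := hchord
        _ ≤ K * (s * (tA / s) ^ p) := hscalar'
    linarith [hfin, hmono, hBlow]

/-- Anti-monotonicity of the matrix inverse in the Loewner order. -/
lemma inv_sub_inv_posSemidef {d : ℕ} {X Y : Matrix (Fin d) (Fin d) ℂ}
    (hXpsd : X.PosSemidef)
    (hXinv : X * X⁻¹ = 1) (hYinv : Y * Y⁻¹ = 1)
    (hXYpsd : (Y - X).PosSemidef)
    (hXih : X⁻¹.IsHermitian) (hYih : Y⁻¹.IsHermitian) :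
    (X⁻¹ - Y⁻¹).PosSemidef := by
  have hX : X.IsHermitian := hXpsd.1
  refine Matrix.PosSemidef.of_dotProduct_mulVec_nonneg (hXih.sub hYih) fun x => ?_
  set u := Y⁻¹ *ᵥ x with hu
  set v := X⁻¹ *ᵥ x with hv
  have hxu : Y *ᵥ u = x := by rw [hu, mulVec_mulVec, hYinv, Matrix.one_mulVec]
  have hxv : X *ᵥ v = x := by rw [hv, mulVec_mulVec, hXinv, Matrix.one_mulVec]
  have e2 : star x ⬝ᵥ v = star v ⬝ᵥ x := by
    conv_lhs => rw [← hxv]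
    rw [← dotHerm hX, hxv]
  have e3 : star v ⬝ᵥ X *ᵥ u = star x ⬝ᵥ u := by rw [dotHerm hX, hxv]
  have key : star x ⬝ᵥ (X⁻¹ - Y⁻¹) *ᵥ x
      = star (u - v) ⬝ᵥ X *ᵥ (u - v) + star u ⬝ᵥ (Y - X) *ᵥ u := by
    have expand : star (u - v) ⬝ᵥ X *ᵥ (u - v) + star u ⬝ᵥ (Y - X) *ᵥ u
        = star u ⬝ᵥ X *ᵥ u - star u ⬝ᵥ X *ᵥ v - star v ⬝ᵥ X *ᵥ u + star v ⬝ᵥ X *ᵥ v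
          + star u ⬝ᵥ Y *ᵥ u - star u ⬝ᵥ X *ᵥ u := by
      simp only [Matrix.sub_mulVec, Matrix.mulVec_sub, dotProduct_sub, sub_dotProduct, star_sub]
      ring
    rw [Matrix.sub_mulVec, dotProduct_sub, ← hv, ← hu, expand, e3, hxv, hxu, e2]
    ring
  rw [key]
  exact add_nonneg (hXpsd.dotProduct_mulVec_nonneg _) (hXYpsd.dotProduct_mulVec_nonneg _)

lemma eigLo {d : ℕ} (A : Matrix (Fin d) (Fin d) ℂ) (hA : A.IsHermitian) (i : Fin d) :
    lamMin A ≤ hA.eigenvalues i :=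
  csInf_le (Matrix.finite_real_spectrum).bddBelow (hA.eigenvalues_mem_spectrum_real i)

lemma eigHi {d : ℕ} (A : Matrix (Fin d) (Fin d) ℂ) (hA : A.IsHermitian) (i : Fin d) :
    hA.eigenvalues i ≤ lamMax A :=
  le_csSup (Matrix.finite_real_spectrum).bddAbove (hA.eigenvalues_mem_spectrum_real i)

end Machinery

/-- If `C_L ≤ B ≤ C_U` in the Loewner order, with `C_L` positive semidefinite and the
extreme eigenvalues of `C_L` and `C_U` strictly positive and distinct, then for every `p ≥ 2`
one has `𝒦(λ_min C_L, λ_max C_L, p)⁻¹ • C_L^p ≤ B^p ≤ 𝒦(λ_min C_U, λ_max C_U, p) • C_U^p`. -/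
theorem kantorovich_power_bounds
    (d : ℕ) (B CL CU : Matrix (Fin d) (Fin d) ℂ)
    (hB : B.IsHermitian) (hCL : CL.IsHermitian) (hCU : CU.IsHermitian)
    (hCLpsd : CL.PosSemidef)
    (hLB : (B - CL).PosSemidef) (hBU : (CU - B).PosSemidef)
    (hL0 : 0 < lamMin CL) (hL1 : lamMin CL < lamMax CL)
    (hU0 : 0 < lamMin CU) (hU1 : lamMin CU < lamMax CU)
    (p : ℕ) (hp : 2 ≤ p) :
    (B ^ p - (kantorovich (lamMin CL) (lamMax CL) (p : ℝ))⁻¹ • CL ^ p).PosSemidef ∧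
    ((kantorovich (lamMin CU) (lamMax CU) (p : ℝ)) • CU ^ p - B ^ p).PosSemidef := by
  have hBpsd : B.PosSemidef := by
    have h := hCLpsd.add hLB
    rwa [add_sub_cancel] at h
  constructor
  · -- lower bound
    refine core_lemma (SpecData.ofHermitian hCL) (SpecData.ofHermitian hB) hL0 hL1
      (kant_pos hL0 hL1 hp) ?_ ?_ hLB hp ?_
    · intro i
      exact ⟨eigLo CL hCL i, eigHi CL hCL i⟩
    · intro i
      exact hBpsd.eigenvalues_nonneg i
    · intro t ht
      exact kant_line _ _ hL0 hL1 hp ht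
  · -- upper bound
    set SB := SpecData.ofHermitian hB with hSB
    set SCL := SpecData.ofHermitian hCL with hSCL
    set SCU := SpecData.ofHermitian hCU with hSCU
    have hCLlow : ∀ i, lamMin CL ≤ SCL.ev i := fun i => eigLo CL hCL i
    have hCL1 : (CL - lamMin CL • 1).PosSemidef := SCL.sub_smul_one_posSemidef hCLlow
    have hB1 : (B - lamMin CL • 1).PosSemidef := by
      have h := hLB.add hCL1
      rwa [sub_add_sub_cancel] at h
    have hevB_pos : ∀ i, 0 < SB.ev i := fun i => lt_of_lt_of_le hL0 (SB.ev_le_of_loewner hB1 i)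
    have hevCU_lo : ∀ i, lamMin CU ≤ SCU.ev i := fun i => eigLo CU hCU i
    have hevCU_hi : ∀ i, SCU.ev i ≤ lamMax CU := fun i => eigHi CU hCU i
    have hevCU_pos : ∀ i, 0 < SCU.ev i := fun i => lt_of_lt_of_le hU0 (hevCU_lo i)
    have hBne : ∀ i, SB.ev i ≠ 0 := fun i => (hevB_pos i).ne'
    have hCUne : ∀ i, SCU.ev i ≠ 0 := fun i => (hevCU_pos i).ne'
    have hanti1 : (B⁻¹ - CU⁻¹).PosSemidef :=
      inv_sub_inv_posSemidef hBpsd (SB.mul_inv_cancel' hBne) (SCU.mul_inv_cancel' hCUne)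
        hBU (SB.inv hBne).isHermitian (SCU.inv hCUne).isHermitian
    set K := kantorovich (lamMin CU) (lamMax CU) (p : ℝ) with hKdef
    have hKpos : 0 < K := kant_pos hU0 hU1 hp
    have hMiU : 0 < (lamMax CU)⁻¹ := inv_pos.mpr (lt_trans hU0 hU1)
    have hmM' : (lamMax CU)⁻¹ < (lamMin CU)⁻¹ := inv_strictAnti₀ hU0 hU1
    have hcore : ((B⁻¹) ^ p - K⁻¹ • (CU⁻¹) ^ p).PosSemidef := by
      refine core_lemma (SCU.inv hCUne) (SB.inv hBne) hMiU hmM' hKpos ?_ ?_ hanti1 hp ?_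
      · intro i
        refine ⟨?_, ?_⟩
        · exact inv_anti₀ (hevCU_pos i) (hevCU_hi i)
        · exact inv_anti₀ hU0 (hevCU_lo i)
      · intro i
        exact inv_nonneg.mpr (hevB_pos i).le
      · intro t ht
        exact kant_line_inv (lamMin CU) (lamMax CU) hU0 hU1 hp ht
    have hCUcomm : (CU⁻¹) ^ p * CU ^ p = 1 := by
      have hc : Commute CU⁻¹ CU := by
        unfold Commute SemiconjBy
        rw [SCU.inv_mul_cancel'' hCUne, SCU.mul_inv_cancel' hCUne]
      rw [← hc.mul_pow, SCU.inv_mul_cancel'' hCUne, one_pow]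
    have hBcomm : (B⁻¹) ^ p * B ^ p = 1 := by
      have hc : Commute B⁻¹ B := by
        unfold Commute SemiconjBy
        rw [SB.inv_mul_cancel'' hBne, SB.mul_inv_cancel' hBne]
      rw [← hc.mul_pow, SB.inv_mul_cancel'' hBne, one_pow]
    have hXmul : (K⁻¹ • (CU⁻¹) ^ p) * (K • CU ^ p) = 1 := by
      rw [smul_mul_smul_comm, inv_mul_cancel₀ hKpos.ne', hCUcomm, one_smul]
    have hXinv_eq : (K⁻¹ • (CU⁻¹) ^ p)⁻¹ = K • CU ^ p := Matrix.inv_eq_right_inv hXmul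
    have hYinv_eq : ((B⁻¹) ^ p)⁻¹ = B ^ p := Matrix.inv_eq_right_inv hBcomm
    have hXmpsd : (K⁻¹ • (CU⁻¹) ^ p).PosSemidef :=
      realSmul_posSemidef (inv_nonneg.mpr hKpos.le)
        ((SCU.inv hCUne).posSemidef_pow (fun i => inv_nonneg.mpr (hevCU_pos i).le) p)
    have hres := inv_sub_inv_posSemidef hXmpsd
      (by rw [hXinv_eq]; exact hXmul)
      (by rw [hYinv_eq]; exact hBcomm)
      hcore
      (by rw [hXinv_eq]; exact realSmul_isHermitian _ (hCU.pow p))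
      (by rw [hYinv_eq]; exact hB.pow p)
    rw [hXinv_eq, hYinv_eq] at hres
    exact hres
end
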